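/- For every k ∈ ℕ and δ > 0, if B > k/δ then every subset S ⊆ [B]^k of size at least δ·B^k contains a directed cycle of length exactly k in the labeling gadget L such that (after cyclic shift) the i-th edge of the cycle has color i. -/
import Mathlib


/-- Cyclic successor on `Fin n`. -/
def fnext {n : ℕ} (j : Fin n) : Fin n :=
  ⟨(j.val + 1) % n, Nat.mod_lt _ (Nat.lt_of_le_of_lt (Nat.zero_le _) j.isLt)⟩

/-- The labeling-gadget digraph on `[B]^k`: an edge of color `i` from `a` to `b`
strictly increases coordinate `i`, strictly decreases coordinate `i+1` (mod `k`),
and fixes every other coordinate. -/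
def gadgetAdj (B k : ℕ) (i : Fin k) (a b : Fin k → Fin B) : Prop :=
  a i < b i ∧ b (fnext i) < a (fnext i) ∧
    ∀ j : Fin k, j ≠ i → j ≠ fnext i → a j = b j

lemma fnext_ne {k : ℕ} (hk : 2 ≤ k) (j : Fin k) : fnext j ≠ j := by
  have hj := j.isLt
  simp only [fnext, Ne, Fin.ext_iff]
  rcases Nat.lt_or_ge (j.val + 1) k with h | h
  · rw [Nat.mod_eq_of_lt h]; omega
  · have hjk : j.val + 1 = k := by omega
    rw [hjk, Nat.mod_self]; omega

theorem stmt_14 (k B : ℕ) (hk : 2 ≤ k) (δ : ℝ) (hδ : 0 < δ)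
    (hB : (k : ℝ) / δ < B)
    (S : Set (Fin k → Fin B)) (hS : δ * (B : ℝ) ^ k ≤ S.ncard) :
    ∃ c : Fin k → (Fin k → Fin B), Function.Injective c ∧
      (∀ j, c j ∈ S) ∧ ∀ j : Fin k, gadgetAdj B k j (c j) (c (fnext j)) := by
  classical
  have hB0 : 0 < B := by
    have h0 : (0:ℝ) ≤ (k:ℝ)/δ := by positivity
    exact_mod_cast h0.trans_lt hB
  set Min : Fin k → (Fin k → Fin B) → Prop :=
    fun i w => ∀ a ∈ S, (∀ j, j ≠ i → a j = w j) → w i ≤ a i with hMin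
  -- each bad set has card at most B^(k-1)
  have hcard : ∀ i : Fin k,
      (Finset.univ.filter (fun w => w ∈ S ∧ Min i w)).card ≤ B ^ (k-1) := by
    intro i
    have htarget : Fintype.card ({j : Fin k // j ≠ i} → Fin B) = B ^ (k-1) := by
      rw [Fintype.card_fun, Fintype.card_fin]
      congr 1
      have : Fintype.card {j : Fin k // j ≠ i} = Fintype.card (Fin k) - 1 := by
        simp [Fintype.card_subtype_compl, Fintype.card_subtype_eq]
      simp only [Fintype.card_fin] at this; exact this
    rw [← htarget, ← Finset.card_univ]
    apply Finset.card_le_card_of_injOn (fun w => fun j => w j.val)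
    · intro w _; exact Finset.mem_univ _
    · intro w hw w' hw' hww
      simp only [Finset.mem_coe, Finset.mem_filter] at hw hw'
      have hagree : ∀ j : Fin k, j ≠ i → w j = w' j := by
        intro j hj
        exact congrFun hww ⟨j, hj⟩
      funext j
      by_cases hj : j = i
      · subst hj
        exact le_antisymm (hw.2.2 w' hw'.2.1 (fun m hm => (hagree m hm).symm))
          (hw'.2.2 w hw.2.1 (fun m hm => hagree m hm))
      · exact hagree j hj
  -- union of bad sets
  set BadAll : Finset (Fin k → Fin B) :=
    Finset.univ.filter (fun w => w ∈ S ∧ ∃ i, Min i w) with hBadAll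
  have hBadCard : BadAll.card ≤ k * B ^ (k-1) := by
    have hsub : BadAll ⊆ Finset.univ.biUnion
        (fun i : Fin k => Finset.univ.filter (fun w => w ∈ S ∧ Min i w)) := by
      intro w hw
      simp only [hBadAll, Finset.mem_filter, Finset.mem_univ, true_and] at hw
      obtain ⟨hwS, i, hi⟩ := hw
      simp only [Finset.mem_biUnion, Finset.mem_univ, true_and, Finset.mem_filter]
      exact ⟨i, hwS, hi⟩
    calc BadAll.card ≤ _ := Finset.card_le_card hsub
      _ ≤ ∑ i : Fin k, (Finset.univ.filter (fun w => w ∈ S ∧ Min i w)).card :=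
        Finset.card_biUnion_le
      _ ≤ ∑ _i : Fin k, B ^ (k-1) := Finset.sum_le_sum (fun i _ => hcard i)
      _ = k * B ^ (k-1) := by simp [Finset.sum_const, Finset.card_univ, mul_comm]
  -- the real inequality
  have hlt : (k * B ^ (k-1) : ℝ) < δ * (B:ℝ) ^ k := by
    have hkB : (k:ℝ) < δ * B := by
      rw [div_lt_iff₀ hδ] at hB
      linarith
    have hpow : (0:ℝ) < (B:ℝ) ^ (k-1) := by positivity
    have hBk : (B:ℝ) ^ k = (B:ℝ) * (B:ℝ) ^ (k-1) := by
      rw [← pow_succ']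
      congr 1
      omega
    calc (k * B ^ (k-1) : ℝ) < (δ * B) * (B:ℝ) ^ (k-1) :=
          mul_lt_mul_of_pos_right hkB hpow
      _ = δ * (B:ℝ) ^ k := by rw [hBk]; ring
  have hSfin : S.ncard = S.toFinset.card := Set.ncard_eq_toFinset_card' S
  have hcards : BadAll.card < S.toFinset.card := by
    have h1 : (BadAll.card : ℝ) < (S.toFinset.card : ℝ) := by
      have h2 : (BadAll.card : ℝ) ≤ (k * B ^ (k-1) : ℕ) := by exact_mod_cast hBadCard
      push_cast at h2
      rw [hSfin] at hS
      linarith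
    exact_mod_cast h1
  -- find a good point w
  have : ∃ w, w ∈ S.toFinset ∧ w ∉ BadAll := by
    by_contra h
    push_neg at h
    exact absurd (Finset.card_le_card h) (not_le.mpr hcards)
  obtain ⟨w, hwS', hwGood⟩ := this
  have hwS : w ∈ S := Set.mem_toFinset.mp hwS'
  have hnot : ∀ i : Fin k, ∃ a, a ∈ S ∧ (∀ j, j ≠ i → a j = w j) ∧ a i < w i := by
    intro i
    by_contra h
    push_neg at h
    apply hwGood
    simp only [hBadAll, Finset.mem_filter, Finset.mem_univ, true_and]
    exact ⟨hwS, i, h⟩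
  choose c hcS hcagree hclt using hnot
  refine ⟨c, ?_, hcS, ?_⟩
  · intro j1 j2 h
    by_contra hne
    have h1 := hclt j1
    have h2 : c j2 j1 = w j1 := hcagree j2 j1 hne
    rw [h, h2] at h1
    exact lt_irrefl _ h1
  · intro j
    have hne : fnext j ≠ j := fnext_ne hk j
    refine ⟨?_, ?_, ?_⟩
    · have h1 : c (fnext j) j = w j := hcagree (fnext j) j (Ne.symm hne)
      rw [h1]
      exact hclt j
    · have h1 : c j (fnext j) = w (fnext j) := hcagree j (fnext j) hne
      rw [h1]
      exact hclt (fnext j)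
    · intro m hm1 hm2
      rw [hcagree j m hm1, hcagree (fnext j) m hm2]
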